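/- Consider a public products nonatomic aggregative game with cost functions f_θ(x_θ, X) = ⟨x_θ, c(X)⟩ − u_θ(x_θ), where c : M → R^T is a monotone map and each u_θ is concave and differentiable. Then the game is monotone: ∫_Θ ⟨g_x(θ) − g_y(θ), x_θ − y_θ⟩ dθ ≥ 0 for all feasible profiles x, y. -/

import Mathlib

open Metric MeasureTheory
open scoped RealInnerProductSpace

lemma concave_grad_ineq {E : Type*} [NormedAddCommGroup E] [InnerProductSpace ℝ E]
    [CompleteSpace E] {s : Set E} {f : E → ℝ} {g x y : E}
    (hf : ConcaveOn ℝ s f) (hx : x ∈ s) (hy : y ∈ s) (hg : HasGradientAt f g x) :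
    f y ≤ f x + ⟪g, y - x⟫ := by
  have hd : HasDerivAt (fun t : ℝ => f (x + t • (y - x))) ⟪g, y - x⟫ 0 := by
    have hψ : HasDerivAt (fun t : ℝ => x + t • (y - x)) (y - x) 0 := by
      simpa using ((hasDerivAt_id (0:ℝ)).smul_const (y - x)).const_add x
    have hg' : HasFDerivAt f ((InnerProductSpace.toDual ℝ E) g) (x + (0:ℝ) • (y - x)) := by
      simpa using hg.hasFDerivAt
    have h := (hg'.comp_hasDerivAt 0 hψ)
    simp at h
    exact h
  have hslope : Filter.Tendsto (slope (fun t : ℝ => f (x + t • (y - x))) 0)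
      (nhdsWithin 0 (Set.Ioi 0)) (nhds ⟪g, y - x⟫) :=
    (hasDerivAt_iff_tendsto_slope.mp hd).mono_left
      (nhdsWithin_mono 0 (fun t ht => ne_of_gt ht))
  have hle : ∀ᶠ t in nhdsWithin (0:ℝ) (Set.Ioi 0),
      f y - f x ≤ slope (fun t : ℝ => f (x + t • (y - x))) 0 t := by
    filter_upwards [Ioc_mem_nhdsGT_of_mem (by norm_num : (0:ℝ) ∈ Set.Ico 0 1)] with t ht
    obtain ⟨ht0, ht1⟩ := ht
    have hcc := hf.2 hx hy (by linarith : (0:ℝ) ≤ 1 - t) ht0.le (by ring)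
    have heq : (1 - t) • x + t • y = x + t • (y - x) := by module
    rw [heq] at hcc
    rw [slope_def_field]
    simp only [zero_smul, add_zero, sub_zero, div_eq_inv_mul] at *
    rw [show t⁻¹ * (f (x + t • (y - x)) - f x) = (f (x + t • (y - x)) - f x) / t by ring,
      le_div_iff₀ ht0]
    have : (1 - t) * f x + t * f y ≤ f (x + t • (y - x)) := by simpa [smul_eq_mul] using hcc
    nlinarith
  have := ge_of_tendsto hslope hle
  linarith

/-- Lebesgue measure restricted to the player set `Θ = [0,1]`. -/
noncomputable def μ01 : Measure ℝ := volume.restrict (Set.Icc 0 1)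

/-- Proposition `prop:monotonemap` i: a public products nonatomic aggregative
game with costs `f_θ(x,X) = ⟨x, c(X)⟩ - u_θ(x)`, `c` monotone and `u_θ` concave
differentiable, is monotone: for all profiles `x, y` valued in `M`,
`∫ ⟨g_x(θ) - g_y(θ), x_θ - y_θ⟩ dθ ≥ 0`, where `g_x(θ) = c(∫x) - ∇u_θ(x_θ)`. -/
theorem public_products_monotone {T : ℕ} {L : ℝ}
    (Ms : Set (EuclideanSpace ℝ (Fin T)))
    (hMconv : Convex ℝ Ms) (hMcomp : IsCompact Ms)
    (c : EuclideanSpace ℝ (Fin T) → EuclideanSpace ℝ (Fin T))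
    (u : ℝ → EuclideanSpace ℝ (Fin T) → ℝ)
    (gu : ℝ → EuclideanSpace ℝ (Fin T) → EuclideanSpace ℝ (Fin T))
    (hcmono : ∀ X ∈ Ms, ∀ Y ∈ Ms, 0 ≤ ⟪c X - c Y, X - Y⟫)
    (hconc : ∀ θ ∈ Set.Icc (0:ℝ) 1, ConcaveOn ℝ Ms (u θ))
    (hgrad : ∀ θ ∈ Set.Icc (0:ℝ) 1, ∀ x ∈ Ms, HasGradientAt (u θ) (gu θ x) x)
    (hgub : ∀ θ x, ‖gu θ x‖ ≤ L)
    (hgumeas : ∀ x : ℝ → EuclideanSpace ℝ (Fin T), Measurable x →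
      AEStronglyMeasurable (fun θ => gu θ (x θ)) μ01)
    (x y : ℝ → EuclideanSpace ℝ (Fin T)) (hxm : Measurable x) (hym : Measurable y)
    (hx : ∀ θ ∈ Set.Icc (0:ℝ) 1, x θ ∈ Ms) (hy : ∀ θ ∈ Set.Icc (0:ℝ) 1, y θ ∈ Ms) :
    0 ≤ ∫ θ, ⟪(c (∫ t, x t ∂μ01) - gu θ (x θ)) - (c (∫ t, y t ∂μ01) - gu θ (y θ)),
              x θ - y θ⟫ ∂μ01 := by
  have hprob : IsProbabilityMeasure μ01 := by
    constructor
    rw [μ01, Measure.restrict_apply_univ, Real.volume_Icc]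
    norm_num
  have haeIcc : ∀ᵐ θ ∂μ01, θ ∈ Set.Icc (0:ℝ) 1 := ae_restrict_mem measurableSet_Icc
  obtain ⟨R, hR⟩ := hMcomp.isBounded.subset_closedBall 0
  have hRnorm : ∀ z ∈ Ms, ‖z‖ ≤ R := fun z hz => by
    simpa [mem_closedBall, dist_zero_right] using hR hz
  have hxint : Integrable x μ01 := by
    refine Integrable.mono' (integrable_const R) hxm.aestronglyMeasurable ?_
    filter_upwards [haeIcc] with θ hθ
    exact hRnorm _ (hx θ hθ)
  have hyint : Integrable y μ01 := by
    refine Integrable.mono' (integrable_const R) hym.aestronglyMeasurable ?_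
    filter_upwards [haeIcc] with θ hθ
    exact hRnorm _ (hy θ hθ)
  set X := ∫ t, x t ∂μ01 with hXdef
  set Y := ∫ t, y t ∂μ01 with hYdef
  have hXmem : X ∈ Ms := by
    refine hMconv.integral_mem hMcomp.isClosed ?_ hxint
    filter_upwards [haeIcc] with θ hθ using hx θ hθ
  have hYmem : Y ∈ Ms := by
    refine hMconv.integral_mem hMcomp.isClosed ?_ hyint
    filter_upwards [haeIcc] with θ hθ using hy θ hθ
  have hxy : Integrable (fun θ => x θ - y θ) μ01 := hxint.sub hyint
  -- split the integrand
  have hsplit : ∀ θ,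
      ⟪(c X - gu θ (x θ)) - (c Y - gu θ (y θ)), x θ - y θ⟫
        = ⟪c X - c Y, x θ - y θ⟫ + ⟪gu θ (y θ) - gu θ (x θ), x θ - y θ⟫ := by
    intro θ
    rw [← inner_add_left]
    congr 1
    abel
  have hf1int : Integrable (fun θ => ⟪c X - c Y, x θ - y θ⟫) μ01 :=
    hxy.const_inner _
  have hf2meas : AEStronglyMeasurable
      (fun θ => ⟪gu θ (y θ) - gu θ (x θ), x θ - y θ⟫) μ01 :=
    AEStronglyMeasurable.inner ((hgumeas y hym).sub (hgumeas x hxm))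
      (hxm.sub hym).aestronglyMeasurable
  have hf2int : Integrable (fun θ => ⟪gu θ (y θ) - gu θ (x θ), x θ - y θ⟫) μ01 := by
    refine Integrable.mono' (integrable_const ((L + L) * (R + R))) hf2meas ?_
    filter_upwards [haeIcc] with θ hθ
    have h1 : ‖gu θ (y θ) - gu θ (x θ)‖ ≤ L + L :=
      (norm_sub_le _ _).trans (add_le_add (hgub _ _) (hgub _ _))
    have h2 : ‖x θ - y θ‖ ≤ R + R :=
      (norm_sub_le _ _).trans (add_le_add (hRnorm _ (hx θ hθ)) (hRnorm _ (hy θ hθ)))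
    calc ‖⟪gu θ (y θ) - gu θ (x θ), x θ - y θ⟫‖
        ≤ ‖gu θ (y θ) - gu θ (x θ)‖ * ‖x θ - y θ‖ := norm_inner_le_norm _ _
      _ ≤ (L + L) * (R + R) :=
          mul_le_mul h1 h2 (norm_nonneg _) (le_trans (norm_nonneg _) h1)
  rw [show (fun θ => ⟪(c X - gu θ (x θ)) - (c Y - gu θ (y θ)), x θ - y θ⟫)
      = fun θ => ⟪c X - c Y, x θ - y θ⟫ + ⟪gu θ (y θ) - gu θ (x θ), x θ - y θ⟫
      from funext hsplit, integral_add hf1int hf2int]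
  have h1 : 0 ≤ ∫ θ, ⟪c X - c Y, x θ - y θ⟫ ∂μ01 := by
    rw [integral_inner hxy, integral_sub hxint hyint]
    exact hcmono X hXmem Y hYmem
  have h2 : 0 ≤ ∫ θ, ⟪gu θ (y θ) - gu θ (x θ), x θ - y θ⟫ ∂μ01 := by
    refine integral_nonneg_of_ae ?_
    filter_upwards [haeIcc] with θ hθ
    have hA := concave_grad_ineq (hconc θ hθ) (hx θ hθ) (hy θ hθ)
      (hgrad θ hθ _ (hx θ hθ))
    have hB := concave_grad_ineq (hconc θ hθ) (hy θ hθ) (hx θ hθ)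
      (hgrad θ hθ _ (hy θ hθ))
    have e1 : ⟪gu θ (y θ) - gu θ (x θ), x θ - y θ⟫
        = ⟪gu θ (y θ), x θ - y θ⟫ - ⟪gu θ (x θ), x θ - y θ⟫ := inner_sub_left _ _ _
    have e2 : ⟪gu θ (x θ), y θ - x θ⟫ = -⟪gu θ (x θ), x θ - y θ⟫ := by
      rw [show y θ - x θ = -(x θ - y θ) by abel, inner_neg_right]
    simp only [Pi.zero_apply]
    linarith
  linarith
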